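/- Let H be a finite-dimensional Hilbert space, ρ ≥ 0 a density matrix, T ⊆ T_sa(H) an n-dimensional subspace of traceless directions, g a positive quadratic form on T. Define U*(g) := { (a, S) ∈ End(T) × T_sa(H) : g(x,x)ρ − S − a(x) ≥ 0 for all x ∈ T } and Spur(a,S) := tr_T a + tr_H S. Then the set U*(g) ∩ Spur⁻¹([0, ∞)) is compact (with respect to the operator norm on End(T) and trace norm on T_sa(H)). -/

import Mathlib

noncomputable section

/-- Trace of a continuous linear operator on the finite-dimensional Hilbert
space `EuclideanSpace ℂ (Fin d)`. -/
def clmTrace {d : ℕ}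
    (A : EuclideanSpace ℂ (Fin d) →L[ℂ] EuclideanSpace ℂ (Fin d)) : ℂ :=
  LinearMap.trace ℂ (EuclideanSpace ℂ (Fin d))
    (A : EuclideanSpace ℂ (Fin d) →ₗ[ℂ] EuclideanSpace ℂ (Fin d))

namespace Stmt14Aux

open ContinuousLinearMap

variable {d : ℕ}

local notation "E" => EuclideanSpace ℂ (Fin d)

/-- A self-adjoint operator whose quadratic form is bounded by `M` on the unit
sphere has norm at most `M`. -/
lemma sa_norm_le (A : E →L[ℂ] E) (hA : IsSelfAdjoint A) {M : ℝ} (hM : 0 ≤ M)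
    (h : ∀ v : E, ‖v‖ = 1 → |(inner ℂ (A v) v : ℂ).re| ≤ M) : ‖A‖ ≤ M := by
  have hsym := hA.isSymmetric
  have hrank : Module.finrank ℂ (EuclideanSpace ℂ (Fin d)) = d := finrank_euclideanSpace_fin
  set b := hsym.eigenvectorBasis hrank with hb
  set μ := hsym.eigenvalues hrank with hμdef
  have hμ : ∀ i, |μ i| ≤ M := by
    intro i
    have hb1 : ‖b i‖ = 1 := b.orthonormal.1 i
    have h2 := h (b i) hb1
    have he : (inner ℂ (A (b i)) (b i) : ℂ) = (μ i : ℂ) := by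
      have : A (b i) = (μ i : ℂ) • b i := hsym.apply_eigenvectorBasis hrank i
      rw [this, inner_smul_left, Complex.conj_ofReal, inner_self_eq_norm_sq_to_K, hb1]
      norm_num
    rwa [he, Complex.ofReal_re] at h2
  refine A.opNorm_le_bound hM fun v => ?_
  have h1 : ‖A v‖ = ‖b.repr (A v)‖ := (b.repr.norm_map _).symm
  have h2 : ∀ i, ‖b.repr (A v) i‖ ^ 2 ≤ M ^ 2 * ‖b.repr v i‖ ^ 2 := by
    intro i
    have h3 : b.repr (A v) i = (μ i : ℂ) * b.repr v i :=
      hsym.eigenvectorBasis_apply_self_apply hrank v i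
    rw [h3, norm_mul, Complex.norm_real, mul_pow, Real.norm_eq_abs]
    have := pow_le_pow_left₀ (abs_nonneg (μ i)) (hμ i) 2
    exact mul_le_mul_of_nonneg_right this (sq_nonneg _)
  calc ‖A v‖ = Real.sqrt (∑ i, ‖b.repr (A v) i‖ ^ 2) := by
        rw [h1, EuclideanSpace.norm_eq]
    _ ≤ Real.sqrt (∑ i, M ^ 2 * ‖b.repr v i‖ ^ 2) :=
        Real.sqrt_le_sqrt (Finset.sum_le_sum fun i _ => h2 i)
    _ = Real.sqrt (M ^ 2 * ∑ i, ‖b.repr v i‖ ^ 2) := by rw [Finset.mul_sum]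
    _ = M * Real.sqrt (∑ i, ‖b.repr v i‖ ^ 2) := by
        rw [Real.sqrt_mul (sq_nonneg M), Real.sqrt_sq hM]
    _ = M * ‖v‖ := by rw [← EuclideanSpace.norm_eq, b.repr.norm_map]

/-- A positive operator has norm at most its trace. -/
lemma pos_norm_le_trace (A : E →L[ℂ] E) (hA : A.IsPositive) : ‖A‖ ≤ (clmTrace A).re := by
  have hsa := hA.isSelfAdjoint
  have hsym := hsa.isSymmetric
  have hrank : Module.finrank ℂ (EuclideanSpace ℂ (Fin d)) = d := finrank_euclideanSpace_fin
  set b := hsym.eigenvectorBasis hrank with hb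
  set μ := hsym.eigenvalues hrank with hμdef
  have hμ0 : ∀ i, 0 ≤ μ i := by
    intro i
    have hb1 : ‖b i‖ = 1 := b.orthonormal.1 i
    have h2 := hA.re_inner_nonneg_left (b i)
    have he : (inner ℂ (A (b i)) (b i) : ℂ) = (μ i : ℂ) := by
      have : A (b i) = (μ i : ℂ) • b i := hsym.apply_eigenvectorBasis hrank i
      rw [this, inner_smul_left, Complex.conj_ofReal, inner_self_eq_norm_sq_to_K, hb1]
      norm_num
    rw [he] at h2
    simpa using h2
  have htr : (clmTrace A).re = ∑ i, μ i := by
    have h1 : clmTrace A = ∑ i, (μ i : ℂ) := by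
      rw [clmTrace, LinearMap.trace_eq_matrix_trace ℂ b.toBasis, Matrix.trace]
      apply Finset.sum_congr rfl
      intro i _
      rw [Matrix.diag_apply, LinearMap.toMatrix_apply, OrthonormalBasis.coe_toBasis,
        OrthonormalBasis.coe_toBasis_repr_apply]
      have h2 : b.repr ((A : E →ₗ[ℂ] E) (b i)) i = (μ i : ℂ) * b.repr (b i) i :=
        hsym.eigenvectorBasis_apply_self_apply hrank (b i) i
      rw [h2, b.repr_self, EuclideanSpace.single_apply]
      simp
    rw [h1, ← Complex.ofReal_sum, Complex.ofReal_re]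
  rw [htr]
  refine sa_norm_le A hsa (Finset.sum_nonneg fun i _ => hμ0 i) fun v hv => ?_
  -- compute the quadratic form in coordinates
  have hinner : (inner ℂ (A v) v : ℂ) = ∑ i, ((μ i * ‖b.repr v i‖ ^ 2 : ℝ) : ℂ) := by
    rw [← b.repr.inner_map_map (A v) v]
    rw [PiLp.inner_apply]
    apply Finset.sum_congr rfl
    intro i _
    have h3 : b.repr (A v) i = (μ i : ℂ) * b.repr v i :=
      hsym.eigenvectorBasis_apply_self_apply hrank v i
    rw [h3]
    simp only [RCLike.inner_apply, map_mul, Complex.conj_ofReal]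
    rw [mul_left_comm, RCLike.mul_conj, Complex.ofReal_mul, Complex.ofReal_pow]
    rfl
  have hre : (inner ℂ (A v) v : ℂ).re = ∑ i, μ i * ‖b.repr v i‖ ^ 2 := by
    rw [hinner, ← Complex.ofReal_sum, Complex.ofReal_re]
  have hci : ∀ i, ‖b.repr v i‖ ^ 2 ≤ 1 := by
    intro i
    have h4 : b.repr v i = inner ℂ (b i) v := b.repr_apply_apply v i
    have h5 : ‖(inner ℂ (b i) v : ℂ)‖ ≤ ‖b i‖ * ‖v‖ := norm_inner_le_norm _ _
    rw [b.orthonormal.1 i, hv, one_mul] at h5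
    rw [h4]
    calc ‖(inner ℂ (b i) v : ℂ)‖ ^ 2 ≤ 1 ^ 2 := by
          exact pow_le_pow_left₀ (norm_nonneg _) h5 2
      _ = 1 := one_pow 2
  rw [hre, abs_of_nonneg (Finset.sum_nonneg fun i _ =>
    mul_nonneg (hμ0 i) (sq_nonneg _))]
  refine Finset.sum_le_sum fun i _ => ?_
  calc μ i * ‖b.repr v i‖ ^ 2 ≤ μ i * 1 :=
        mul_le_mul_of_nonneg_left (hci i) (hμ0 i)
    _ = μ i := mul_one _

lemma isClosed_isSelfAdjoint : IsClosed {A : E →L[ℂ] E | IsSelfAdjoint A} := by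
  have hset : {A : E →L[ℂ] E | IsSelfAdjoint A} =
      {A : E →L[ℂ] E | ContinuousLinearMap.adjoint A = A} := by
    ext A; exact isSelfAdjoint_iff'
  rw [hset]
  exact isClosed_eq ((ContinuousLinearMap.adjoint :
    (E →L[ℂ] E) ≃ₗᵢ⋆[ℂ] (E →L[ℂ] E)).continuous) continuous_id

lemma isClosed_isPositive : IsClosed {A : E →L[ℂ] E | A.IsPositive} := by
  have hset : {A : E →L[ℂ] E | A.IsPositive} =
      {A : E →L[ℂ] E | ContinuousLinearMap.adjoint A = A} ∩
        ⋂ v : E, {A : E →L[ℂ] E | 0 ≤ (inner ℂ (A v) v : ℂ).re} := by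
    ext A
    simp only [Set.mem_setOf_eq, Set.mem_inter_iff, Set.mem_iInter]
    constructor
    · exact fun h => ⟨isSelfAdjoint_iff'.1 h.isSelfAdjoint, fun v => h.re_inner_nonneg_left v⟩
    · exact fun h => ⟨(isSelfAdjoint_iff'.2 h.1).isSymmetric, fun v => h.2 v⟩
  rw [hset]
  refine IsClosed.inter (isClosed_eq ?_ continuous_id)
    (isClosed_iInter fun v => isClosed_le continuous_const ?_)
  · exact (ContinuousLinearMap.adjoint :
      (E →L[ℂ] E) ≃ₗᵢ⋆[ℂ] (E →L[ℂ] E)).continuous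
  · exact Complex.continuous_re.comp
      (Continuous.inner ((ContinuousLinearMap.apply ℂ (EuclideanSpace ℂ (Fin d)) v).continuous)
        continuous_const)

end Stmt14Aux

set_option maxHeartbeats 1000000 in
set_option synthInstance.maxHeartbeats 100000 in
open Stmt14Aux in
/-- `H` a finite-dimensional Hilbert space, `ρ ≥ 0` a density
matrix, `T` an `n`-dimensional subspace of traceless self-adjoint operators
(realized by a linear embedding `ι : T → T_sa(H)`), and `g` a positive quadratic
form on `T`.  With
`U*(g) = {(a,S) ∈ End(T) × T_sa(H) : g(x,x)ρ − S − a(x) ≥ 0 for all x ∈ T}` and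
`Spur(a,S) = tr_T a + tr_H S`, the set `U*(g) ∩ Spur⁻¹([0,∞))` is compact. -/
theorem stmt14 (d : ℕ)
    (ρ : EuclideanSpace ℂ (Fin d) →L[ℂ] EuclideanSpace ℂ (Fin d))
    (hρpos : ρ.IsPositive) (hρtr : clmTrace ρ = 1)
    (T : Type*) [NormedAddCommGroup T] [NormedSpace ℝ T] [FiniteDimensional ℝ T]
    (ι : T →L[ℝ] EuclideanSpace ℂ (Fin d) →L[ℂ] EuclideanSpace ℂ (Fin d))
    (hι : Function.Injective ι)
    (hTsa : ∀ x : T, IsSelfAdjoint (ι x))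
    (hTtr : ∀ x : T, clmTrace (ι x) = 0)
    (g : T →ₗ[ℝ] T →ₗ[ℝ] ℝ) (hgsymm : ∀ x y, g x y = g y x)
    (hgpos : ∀ x : T, x ≠ 0 → 0 < g x x) :
    IsCompact {p : (T →L[ℝ] T) ×
        (EuclideanSpace ℂ (Fin d) →L[ℂ] EuclideanSpace ℂ (Fin d)) |
      IsSelfAdjoint p.2 ∧
      (∀ x : T, ((g x x : ℂ) • ρ - p.2 - ι (p.1 x)).IsPositive) ∧
      0 ≤ LinearMap.trace ℝ T (p.1 : T →ₗ[ℝ] T) + (clmTrace p.2).re } := by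
  classical
  haveI : ProperSpace (T →L[ℝ] T) := FiniteDimensional.proper ℝ _
  haveI : ProperSpace (EuclideanSpace ℂ (Fin d) →L[ℂ] EuclideanSpace ℂ (Fin d)) :=
    FiniteDimensional.proper ℂ _
  apply Metric.isCompact_of_isClosed_isBounded
  · -- closedness
    have hset : {p : (T →L[ℝ] T) ×
        (EuclideanSpace ℂ (Fin d) →L[ℂ] EuclideanSpace ℂ (Fin d)) |
        IsSelfAdjoint p.2 ∧ (∀ x : T, ((g x x : ℂ) • ρ - p.2 - ι (p.1 x)).IsPositive) ∧
        0 ≤ LinearMap.trace ℝ T (p.1 : T →ₗ[ℝ] T) + (clmTrace p.2).re} =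
        {p : (T →L[ℝ] T) ×
        (EuclideanSpace ℂ (Fin d) →L[ℂ] EuclideanSpace ℂ (Fin d)) | IsSelfAdjoint p.2} ∩
        ((⋂ x : T, {p : (T →L[ℝ] T) ×
          (EuclideanSpace ℂ (Fin d) →L[ℂ] EuclideanSpace ℂ (Fin d)) |
            ((g x x : ℂ) • ρ - p.2 - ι (p.1 x)).IsPositive}) ∩
         {p : (T →L[ℝ] T) × (EuclideanSpace ℂ (Fin d) →L[ℂ] EuclideanSpace ℂ (Fin d)) |
            0 ≤ LinearMap.trace ℝ T (p.1 : T →ₗ[ℝ] T) + (clmTrace p.2).re}) := by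
      ext p
      constructor
      · rintro ⟨h1, h2, h3⟩
        exact ⟨h1, Set.mem_iInter.2 h2, h3⟩
      · rintro ⟨h1, h2, h3⟩
        exact ⟨h1, Set.mem_iInter.1 h2, h3⟩
    rw [hset]
    refine IsClosed.inter ?_ (IsClosed.inter (isClosed_iInter fun x => ?_) ?_)
    · exact isClosed_isSelfAdjoint.preimage continuous_snd
    · refine isClosed_isPositive.preimage ?_
      exact (continuous_const.sub continuous_snd).sub
        (ι.continuous.comp ((ContinuousLinearMap.apply ℝ T x).continuous.comp continuous_fst))
    · refine isClosed_le continuous_const ?_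
      have h1 : Continuous fun p : (T →L[ℝ] T) ×
          (EuclideanSpace ℂ (Fin d) →L[ℂ] EuclideanSpace ℂ (Fin d)) =>
          LinearMap.trace ℝ T (p.1 : T →ₗ[ℝ] T) := by
        exact (LinearMap.continuous_of_finiteDimensional
          ((LinearMap.trace ℝ T).comp (ContinuousLinearMap.coeLM ℝ))).comp continuous_fst
      have h2 : Continuous fun p : (T →L[ℝ] T) ×
          (EuclideanSpace ℂ (Fin d) →L[ℂ] EuclideanSpace ℂ (Fin d)) =>
          (clmTrace p.2).re := by
        exact Complex.continuous_re.comp ((LinearMap.continuous_of_finiteDimensional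
          ((LinearMap.trace ℂ (EuclideanSpace ℂ (Fin d))).comp
            (ContinuousLinearMap.coeLM ℂ))).comp continuous_snd)
      exact h1.add h2
  · -- boundedness
    rw [isBounded_iff_forall_norm_le]
    obtain ⟨c, hc0, hc⟩ : ∃ c : ℝ, 0 ≤ c ∧ ∀ y : T, ‖y‖ ≤ c * ‖ι y‖ := by
      obtain ⟨Kc, hKc, hanti⟩ := (ι : T →ₗ[ℝ]
          (EuclideanSpace ℂ (Fin d) →L[ℂ] EuclideanSpace ℂ (Fin d))).exists_antilipschitzWith
        (LinearMap.ker_eq_bot.2 hι)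
      refine ⟨Kc, Kc.coe_nonneg, fun y => ?_⟩
      have h1 := hanti.le_mul_dist y 0
      rw [dist_zero_right, map_zero, dist_zero_right] at h1
      exact h1
    obtain ⟨G, hG0, hG⟩ : ∃ G : ℝ, 0 ≤ G ∧ ∀ x : T, g x x ≤ G * ‖x‖ ^ 2 := by
      let gl : T →ₗ[ℝ] (T →L[ℝ] ℝ) :=
        { toFun := fun x => LinearMap.toContinuousLinearMap (g x)
          map_add' := fun x y => by simp only [map_add]
          map_smul' := fun r x => by simp only [map_smul, RingHom.id_apply] }
      let glc := LinearMap.toContinuousLinearMap gl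
      refine ⟨‖glc‖, ContinuousLinearMap.opNorm_nonneg glc, fun x => ?_⟩
      have h1 : g x x = glc x x := rfl
      rw [h1]
      calc glc x x ≤ ‖glc x x‖ := le_abs_self _
        _ ≤ ‖glc x‖ * ‖x‖ := (glc x).le_opNorm x
        _ ≤ (‖glc‖ * ‖x‖) * ‖x‖ :=
            mul_le_mul_of_nonneg_right (glc.le_opNorm x) (norm_nonneg x)
        _ = ‖glc‖ * ‖x‖ ^ 2 := by ring
    obtain ⟨Ct, hCt0, hCt⟩ : ∃ C : ℝ, 0 ≤ C ∧ ∀ a : T →L[ℝ] T,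
        LinearMap.trace ℝ T (a : T →ₗ[ℝ] T) ≤ C * ‖a‖ := by
      let trc := LinearMap.toContinuousLinearMap
        ((LinearMap.trace ℝ T).comp (ContinuousLinearMap.coeLM ℝ))
      refine ⟨‖trc‖, ContinuousLinearMap.opNorm_nonneg trc, fun a => ?_⟩
      calc LinearMap.trace ℝ T (a : T →ₗ[ℝ] T) ≤ ‖trc a‖ := le_abs_self _
        _ ≤ ‖trc‖ * ‖a‖ := trc.le_opNorm a
    set K1 : ℝ := 2 * c * Real.sqrt (G * ‖ρ‖) with hK1
    have hK10 : 0 ≤ K1 := by positivity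
    set K : ℝ := Ct * K1 with hK
    have hK0 : 0 ≤ K := by positivity
    refine ⟨max (K1 * K) (K * K), ?_⟩
    rintro ⟨a, S⟩ ⟨hsa, hpos, htrp⟩
    have h0 : (-S).IsPositive := by
      have h00 := hpos 0
      have e0 : ((g (0 : T) (0 : T) : ℂ) • ρ - S - ι (a 0)) = -S := by
        simp
        exact zero_smul ℂ ρ
      rwa [e0] at h00
    have hS1 : ‖S‖ ≤ -(clmTrace S).re := by
      have h3 := pos_norm_le_trace (-S) h0
      rw [norm_neg] at h3
      have e1 : clmTrace (-S) = -clmTrace S := by simp [clmTrace]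
      rw [e1] at h3
      simpa using h3
    have hS2 : ‖S‖ ≤ Ct * ‖a‖ := by
      have h4 := hCt a
      linarith
    have hax : ∀ x : T, ‖a x‖ ≤ (K1 * Real.sqrt ‖S‖) * ‖x‖ := by
      intro x
      have hgx : 0 ≤ g x x := by
        rcases eq_or_ne x 0 with h | h
        · simp [h]
        · exact (hgpos x h).le
      have hWn : ‖ι (a x)‖ ≤ 2 * Real.sqrt (g x x * (‖ρ‖ * ‖S‖)) := by
        refine sa_norm_le _ (hTsa (a x)) (by positivity) fun v hv => ?_
        have hq : ∀ t : ℝ, 0 ≤ (g x x * (inner ℂ (ρ v) v : ℂ).re) * (t * t) +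
            (-(inner ℂ ((ι (a x)) v) v : ℂ).re) * t + (-(inner ℂ (S v) v : ℂ).re) := by
          intro t
          have h3 := (hpos (t • x)).re_inner_nonneg_left v
          have e2 : g (t • x) (t • x) = t * t * g x x := by
            have h1 : g (t • x) = t • g x := map_smul g t x
            rw [h1, LinearMap.smul_apply, map_smul, smul_eq_mul, smul_eq_mul]
            ring
          have e3 : ι (a (t • x)) = t • ι (a x) := by
            rw [map_smul, map_smul]
          have e4 : (((g (t • x) (t • x) : ℝ) : ℂ) • ρ - S - ι (a (t • x))) v
              = ((t * t * g x x : ℝ) : ℂ) • ρ v - S v - ((t : ℂ)) • (ι (a x)) v := by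
            rw [e2, e3]
            simp only [ContinuousLinearMap.sub_apply, ContinuousLinearMap.smul_apply,
              ContinuousLinearMap.coe_smul', Pi.smul_apply]
            congr 1
          rw [e4] at h3
          rw [inner_sub_left, inner_sub_left, inner_smul_left, inner_smul_left] at h3
          simp only [RCLike.re_to_complex, Complex.conj_ofReal, Complex.sub_re,
            Complex.re_ofReal_mul] at h3
          nlinarith [h3]
        have hd := discrim_le_zero hq
        rw [discrim] at hd
        have hρb0 : 0 ≤ (inner ℂ (ρ v) v : ℂ).re := by
          simpa using hρpos.re_inner_nonneg_left v
        have hρb : (inner ℂ (ρ v) v : ℂ).re ≤ ‖ρ‖ := by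
          have h5 : ‖(inner ℂ (ρ v) v : ℂ)‖ ≤ ‖ρ v‖ * ‖v‖ := norm_inner_le_norm _ _
          have h6 : ‖ρ v‖ ≤ ‖ρ‖ * ‖v‖ := ρ.le_opNorm v
          have h7 : |(inner ℂ (ρ v) v : ℂ).re| ≤ ‖(inner ℂ (ρ v) v : ℂ)‖ := by
            simpa using RCLike.abs_re_le_norm (inner ℂ (ρ v) v : ℂ)
          rw [hv, mul_one] at h5 h6
          calc (inner ℂ (ρ v) v : ℂ).re ≤ |(inner ℂ (ρ v) v : ℂ).re| := le_abs_self _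
            _ ≤ ‖ρ‖ := by linarith
        have hSb0 : 0 ≤ -(inner ℂ (S v) v : ℂ).re := by
          have h8 := h0.re_inner_nonneg_left v
          simpa using h8
        have hSb : -(inner ℂ (S v) v : ℂ).re ≤ ‖S‖ := by
          have h5 : ‖(inner ℂ (S v) v : ℂ)‖ ≤ ‖S v‖ * ‖v‖ := norm_inner_le_norm _ _
          have h6 : ‖S v‖ ≤ ‖S‖ * ‖v‖ := S.le_opNorm v
          have h7 : |(inner ℂ (S v) v : ℂ).re| ≤ ‖(inner ℂ (S v) v : ℂ)‖ := by
            simpa using RCLike.abs_re_le_norm (inner ℂ (S v) v : ℂ)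
          rw [hv, mul_one] at h5 h6
          calc -(inner ℂ (S v) v : ℂ).re ≤ |(inner ℂ (S v) v : ℂ).re| := neg_le_abs _
            _ ≤ ‖S‖ := by linarith
        have hmul : (g x x * (inner ℂ (ρ v) v : ℂ).re) * (-(inner ℂ (S v) v : ℂ).re)
            ≤ (g x x * ‖ρ‖) * ‖S‖ :=
          mul_le_mul (mul_le_mul_of_nonneg_left hρb hgx) hSb hSb0 (by positivity)
        have hsq : ((inner ℂ ((ι (a x)) v) v : ℂ).re) ^ 2
            ≤ 4 * (g x x * (‖ρ‖ * ‖S‖)) := by nlinarith [hd, hmul]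
        calc |(inner ℂ ((ι (a x)) v) v : ℂ).re|
            = Real.sqrt (((inner ℂ ((ι (a x)) v) v : ℂ).re) ^ 2) :=
              (Real.sqrt_sq_eq_abs _).symm
          _ ≤ Real.sqrt (4 * (g x x * (‖ρ‖ * ‖S‖))) := Real.sqrt_le_sqrt hsq
          _ = 2 * Real.sqrt (g x x * (‖ρ‖ * ‖S‖)) := by
              rw [show (4 : ℝ) * (g x x * (‖ρ‖ * ‖S‖))
                  = 2 ^ 2 * (g x x * (‖ρ‖ * ‖S‖)) by ring,
                Real.sqrt_mul (by norm_num), Real.sqrt_sq (by norm_num)]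
      calc ‖a x‖ ≤ c * ‖ι (a x)‖ := hc (a x)
        _ ≤ c * (2 * Real.sqrt (g x x * (‖ρ‖ * ‖S‖))) :=
            mul_le_mul_of_nonneg_left hWn hc0
        _ ≤ c * (2 * Real.sqrt ((G * ‖x‖ ^ 2) * (‖ρ‖ * ‖S‖))) := by
            have h9 : g x x * (‖ρ‖ * ‖S‖) ≤ (G * ‖x‖ ^ 2) * (‖ρ‖ * ‖S‖) :=
              mul_le_mul_of_nonneg_right (hG x) (by positivity)
            exact mul_le_mul_of_nonneg_left
              (mul_le_mul_of_nonneg_left (Real.sqrt_le_sqrt h9) (by norm_num)) hc0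
        _ = (K1 * Real.sqrt ‖S‖) * ‖x‖ := by
            rw [hK1, show (G * ‖x‖ ^ 2) * (‖ρ‖ * ‖S‖) = ((G * ‖ρ‖) * ‖S‖) * ‖x‖ ^ 2 by ring,
              Real.sqrt_mul (by positivity), Real.sqrt_mul (by positivity),
              Real.sqrt_sq (norm_nonneg x)]
            ring
    have hanorm : ‖a‖ ≤ K1 * Real.sqrt ‖S‖ := a.opNorm_le_bound (by positivity) hax
    have hSK : ‖S‖ ≤ K * Real.sqrt ‖S‖ := by
      calc ‖S‖ ≤ Ct * ‖a‖ := hS2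
        _ ≤ Ct * (K1 * Real.sqrt ‖S‖) := mul_le_mul_of_nonneg_left hanorm hCt0
        _ = K * Real.sqrt ‖S‖ := by rw [hK]; ring
    have hSfin : ‖S‖ ≤ K * K := by
      nlinarith [Real.sq_sqrt (norm_nonneg S), Real.sqrt_nonneg ‖S‖,
        sq_nonneg (K - Real.sqrt ‖S‖)]
    have hsqrtS : Real.sqrt ‖S‖ ≤ K := by
      have h10 := Real.sqrt_le_sqrt hSfin
      rwa [show K * K = K ^ 2 by ring, Real.sqrt_sq hK0] at h10
    have hafin : ‖a‖ ≤ K1 * K :=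
      hanorm.trans (mul_le_mul_of_nonneg_left hsqrtS hK10)
    rw [Prod.norm_def]
    exact max_le (hafin.trans (le_max_left _ _)) (hSfin.trans (le_max_right _ _))

end
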